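/- Let α be a real symmetric positive definite 2s×2s matrix. Then there exists a complex structure J on (ℝ^{2s}, Δ) that commutes with the operator A = Δ⁻¹α, i.e., J satisfies J² = −I, ΔJ = −JᵀΔ, ΔJ is positive semidefinite, and J(Δ⁻¹α) = (Δ⁻¹α)J. (Such a J is given by the orthogonal factor of the polar decomposition of A in the Euclidean space with inner product α.) -/

import Mathlib

open Matrix

/-- The standard symplectic matrix `Δ` of a system of `s` modes: block-diagonal
with `s` copies of the 2×2 block `[[0,1],[-1,0]]`. -/
noncomputable def Sympl (s : ℕ) : Matrix (Fin 2 × Fin s) (Fin 2 × Fin s) ℝ :=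
  Matrix.blockDiagonal (fun _ => !![0, 1; -1, 0])

/-- A real `2s × 2s` matrix `J` is a complex structure with respect to `Δ` if
`J² = -I`, `ΔJ = -JᵀΔ`, and `ΔJ` is positive semidefinite. -/
def IsComplexStructure {s : ℕ} (J : Matrix (Fin 2 × Fin s) (Fin 2 × Fin s) ℝ) : Prop :=
  J * J = -1 ∧ Sympl s * J = -(Jᵀ * Sympl s) ∧ (Sympl s * J).PosSemidef

/- ### Auxiliary lemmas -/

section SqrtCompat
open scoped MatrixOrder

/-- Compatibility: the square root of a PSD real matrix. -/
noncomputable def Matrix.PosSemidef.sqrt {n : Type*} [Fintype n] [DecidableEq n]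
    {A : Matrix n n ℝ} (_ : A.PosSemidef) : Matrix n n ℝ := CFC.sqrt A

lemma Matrix.PosSemidef.posSemidef_sqrt {n : Type*} [Fintype n] [DecidableEq n]
    {A : Matrix n n ℝ} (hA : A.PosSemidef) : hA.sqrt.PosSemidef :=
  (CFC.sqrt_nonneg A).posSemidef

lemma Matrix.PosSemidef.sqrt_mul_self {n : Type*} [Fintype n] [DecidableEq n]
    {A : Matrix n n ℝ} (hA : A.PosSemidef) : hA.sqrt * hA.sqrt = A :=
  CFC.sqrt_mul_sqrt_self A hA.nonneg

lemma Matrix.PosSemidef.eq_sqrt_of_sq_eq {n : Type*} [Fintype n] [DecidableEq n]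
    {A B : Matrix n n ℝ} (hA : A.PosSemidef) (hB : B.PosSemidef) (hAB : A ^ 2 = B) :
    A = hB.sqrt := by
  show A = CFC.sqrt B
  rw [← hAB, pow_two, CFC.sqrt_mul_self A hA.nonneg]

end SqrtCompat

lemma CS.conjT_eq {n : Type*} [Fintype n] (A : Matrix n n ℝ) : Aᴴ = Aᵀ := by
  ext i j; simp [conjTranspose_apply]

lemma CS.spectrum_nonneg_of_posSemidef {n : Type*} [Fintype n] [DecidableEq n]
    {Q : Matrix n n ℝ} (hQ : Q.PosSemidef) {x : ℝ} (hx : x ∈ spectrum ℝ Q) : 0 ≤ x := by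
  have hsp := hQ.1.spectral_theorem
  set U := hQ.1.eigenvectorUnitary with hU
  have hσ : spectrum ℝ Q
      = spectrum ℝ (diagonal (RCLike.ofReal ∘ hQ.1.eigenvalues) : Matrix n n ℝ) := by
    conv_lhs => rw [hsp]
    have := spectrum.units_conjugate (R := ℝ)
      (a := (diagonal (RCLike.ofReal ∘ hQ.1.eigenvalues) : Matrix n n ℝ))
      (u := Unitary.toUnits U)
    convert this using 2
    rfl
  rw [hσ, spectrum_diagonal] at hx
  obtain ⟨i, hi⟩ := hx
  simpa [← hi] using hQ.eigenvalues_nonneg i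

/-- If `S` is invertible, commutes with a PSD matrix `B`, and `S⁻¹ √B S` is symmetric,
then `S` commutes with `√B`. -/
lemma CS.commute_sqrt {n : Type*} [Fintype n] [DecidableEq n]
    {B S : Matrix n n ℝ} (hB : B.PosSemidef) (hS : IsUnit S.det)
    (hM : (S⁻¹ * hB.sqrt * S).IsHermitian) (hcomm : S * B = B * S) :
    S * hB.sqrt = hB.sqrt * S := by
  set Q := hB.sqrt with hQdef
  set M := S⁻¹ * Q * S with hMdef
  have hQ2 : Q * Q = B := hB.sqrt_mul_self
  have hQpsd : Q.PosSemidef := hB.posSemidef_sqrt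
  have hM2 : M ^ 2 = B := by
    rw [pow_two, hMdef]
    calc S⁻¹ * Q * S * (S⁻¹ * Q * S) = S⁻¹ * (Q * (S * S⁻¹) * Q) * S := by
          simp only [Matrix.mul_assoc]
      _ = S⁻¹ * B * S := by rw [Matrix.mul_nonsing_inv _ hS]; simp [Matrix.mul_assoc, hQ2]
      _ = S⁻¹ * (S * B) := by rw [hcomm, Matrix.mul_assoc]
      _ = B := by rw [← Matrix.mul_assoc, Matrix.nonsing_inv_mul _ hS, Matrix.one_mul]
  obtain ⟨u, hu'⟩ := (Matrix.isUnit_iff_isUnit_det S).mpr hS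
  have hσ : spectrum ℝ M = spectrum ℝ Q := by
    have : M = (↑u⁻¹ : Matrix n n ℝ) * Q * (↑u : Matrix n n ℝ) := by
      rw [Matrix.coe_units_inv, hu', hMdef]
    rw [this, spectrum.units_conjugate']
  have hMpsd : M.PosSemidef := by
    apply hM.posSemidef_iff_eigenvalues_nonneg.mpr
    intro i
    exact CS.spectrum_nonneg_of_posSemidef hQpsd (hσ ▸ hM.eigenvalues_mem_spectrum_real i)
  have hMQ : M = Q := hMpsd.eq_sqrt_of_sq_eq hB hM2
  calc S * Q = S * (S⁻¹ * Q * S) := by rw [← hMdef, hMQ]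
    _ = Q * S := by
        rw [← Matrix.mul_assoc, ← Matrix.mul_assoc, Matrix.mul_nonsing_inv _ hS, Matrix.one_mul]

lemma CS.two_two : (!![0, 1; -1, 0] : Matrix (Fin 2) (Fin 2) ℝ) * !![0, 1; -1, 0] = -1 := by
  ext i j
  fin_cases i <;> fin_cases j <;>
    simp [Matrix.mul_apply, Fin.sum_univ_two, Matrix.one_apply]

lemma CS.two_two_t : (!![0, 1; -1, 0] : Matrix (Fin 2) (Fin 2) ℝ)ᵀ = -!![0, 1; -1, 0] := by
  ext i j
  fin_cases i <;> fin_cases j <;> simp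

lemma CS.Sympl_mul_Sympl (s : ℕ) : Sympl s * Sympl s = -1 := by
  rw [Sympl, ← Matrix.blockDiagonal_mul]
  simp only [CS.two_two]
  rw [show (fun _ : Fin s => (-1 : Matrix (Fin 2) (Fin 2) ℝ)) = -(fun _ => 1) from rfl,
    Matrix.blockDiagonal_neg]
  rw [show (fun _ : Fin s => (1 : Matrix (Fin 2) (Fin 2) ℝ))
      = (1 : Fin s → Matrix (Fin 2) (Fin 2) ℝ) from rfl,
    Matrix.blockDiagonal_one]

lemma CS.Sympl_transpose (s : ℕ) : (Sympl s)ᵀ = -(Sympl s) := by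
  rw [Sympl, Matrix.blockDiagonal_transpose]
  simp only [CS.two_two_t]
  rw [show (fun _ : Fin s => -(!![0, 1; -1, 0] : Matrix (Fin 2) (Fin 2) ℝ))
      = -(fun _ => !![0, 1; -1, 0]) from rfl, Matrix.blockDiagonal_neg]

/-- For every real symmetric positive definite matrix `α` there exists
a complex structure `J` on `(ℝ^{2s}, Δ)` commuting with `A = Δ⁻¹α`. -/
theorem exists_complexStructure_commuting (s : ℕ)
    (α : Matrix (Fin 2 × Fin s) (Fin 2 × Fin s) ℝ) (hα : α.PosDef) :
    ∃ J : Matrix (Fin 2 × Fin s) (Fin 2 × Fin s) ℝ, IsComplexStructure J ∧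
      J * ((Sympl s)⁻¹ * α) = ((Sympl s)⁻¹ * α) * J := by
  classical
  set Δ := Sympl s with hΔdef
  have hΔΔ : Δ * Δ = -1 := CS.Sympl_mul_Sympl s
  have hΔT : Δᵀ = -Δ := CS.Sympl_transpose s
  have hΔ1 : Δ * (-Δ) = 1 := by rw [Matrix.mul_neg, hΔΔ, neg_neg]
  have hΔ1' : (-Δ) * Δ = 1 := by rw [Matrix.neg_mul, hΔΔ, neg_neg]
  have hΔinv : Δ⁻¹ = -Δ := Matrix.inv_eq_right_inv hΔ1
  have hΔU : IsUnit Δ := ⟨⟨Δ, -Δ, hΔ1, hΔ1'⟩, rfl⟩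
  have hΔu : IsUnit Δ.det := (Matrix.isUnit_iff_isUnit_det Δ).mp hΔU
  have hΔiU : IsUnit Δ⁻¹ := by rw [hΔinv]; exact ⟨⟨-Δ, Δ, hΔ1', hΔ1⟩, rfl⟩
  -- the square root β of α
  have hα' : α.PosSemidef := hα.posSemidef
  set β := hα'.sqrt with hβdef
  have hβH : βᴴ = β := hα'.posSemidef_sqrt.1
  have hβT : βᵀ = β := by rw [← CS.conjT_eq, hβH]
  have hββ : β * β = α := hα'.sqrt_mul_self
  have hβu : IsUnit β.det := by
    have hdd : β.det * β.det = α.det := by rw [← Matrix.det_mul, hββ]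
    refine isUnit_iff_ne_zero.mpr fun h => ?_
    have hp := hα.det_pos
    rw [← hdd, h, mul_zero] at hp
    exact lt_irrefl 0 hp
  have hβU : IsUnit β := (Matrix.isUnit_iff_isUnit_det β).mpr hβu
  have hβinv : β * β⁻¹ = 1 := Matrix.mul_nonsing_inv _ hβu
  have hβinv' : β⁻¹ * β = 1 := Matrix.nonsing_inv_mul _ hβu
  -- the antisymmetric matrix S
  set S := β * Δ⁻¹ * β with hSdef
  have hSU : IsUnit S := (hβU.mul hΔiU).mul hβU
  have hSu : IsUnit S.det := (Matrix.isUnit_iff_isUnit_det S).mp hSU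
  have hSS1 : S * S⁻¹ = 1 := Matrix.mul_nonsing_inv _ hSu
  have hS1S : S⁻¹ * S = 1 := Matrix.nonsing_inv_mul _ hSu
  have hΔiT : (Δ⁻¹)ᵀ = Δ := by rw [hΔinv, Matrix.transpose_neg, hΔT, neg_neg]
  have hST : Sᵀ = -S := by
    rw [hSdef, Matrix.transpose_mul, Matrix.transpose_mul, hβT, hΔiT, hΔinv]
    simp [Matrix.mul_neg, Matrix.neg_mul, Matrix.mul_assoc]
  -- the positive semidefinite matrix B = SᵀS = -S²
  set B := Sᵀ * S with hBdef
  have hB : B.PosSemidef := by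
    have := Matrix.posSemidef_conjTranspose_mul_self S
    rwa [CS.conjT_eq] at this
  have hBneg : B = -(S * S) := by rw [hBdef, hST, Matrix.neg_mul]
  have hBS : S * B = B * S := by
    rw [hBneg]
    simp [Matrix.mul_neg, Matrix.neg_mul, Matrix.mul_assoc]
  have hBu : IsUnit B.det := by
    rw [hBdef, Matrix.det_mul, Matrix.det_transpose]
    exact hSu.mul hSu
  -- the square root Q of B
  set Q := hB.sqrt with hQdef
  have hQpsd : Q.PosSemidef := hB.posSemidef_sqrt
  have hQH : Qᴴ = Q := hQpsd.1
  have hQT : Qᵀ = Q := by rw [← CS.conjT_eq, hQH]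
  have hQ2 : Q * Q = B := hB.sqrt_mul_self
  have hQu : IsUnit Q.det := by
    have hdd : Q.det * Q.det = B.det := by rw [← Matrix.det_mul, hQ2]
    exact isUnit_of_mul_isUnit_left (hdd ▸ hBu)
  have hQQi : Q * Q⁻¹ = 1 := Matrix.mul_nonsing_inv _ hQu
  have hQiQ : Q⁻¹ * Q = 1 := Matrix.nonsing_inv_mul _ hQu
  -- Q commutes with S² and with S
  have hQB : Q * B = B * Q := by rw [← hQ2, Matrix.mul_assoc]
  have hQSS : (S * S) * Q = Q * (S * S) := by
    have h1 := hQB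
    rw [hBneg, Matrix.mul_neg, Matrix.neg_mul] at h1
    exact (neg_inj.mp h1).symm
  have hnegSinv : (-S)⁻¹ = -S⁻¹ :=
    Matrix.inv_eq_right_inv (by rw [Matrix.neg_mul, Matrix.mul_neg, neg_neg, hSS1])
  have hSiT : (S⁻¹)ᵀ = -S⁻¹ := by
    rw [Matrix.transpose_nonsing_inv, hST, hnegSinv]
  have hMH : (S⁻¹ * Q * S).IsHermitian := by
    show (S⁻¹ * Q * S)ᴴ = _
    rw [CS.conjT_eq, Matrix.transpose_mul (S⁻¹ * Q) S, Matrix.transpose_mul S⁻¹ Q, hQT, hSiT, hST]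
    -- goal : -S * (Q * -S⁻¹) = S⁻¹ * Q * S
    simp only [Matrix.mul_neg, Matrix.neg_mul, neg_neg]
    calc S * (Q * S⁻¹) = (S⁻¹ * S) * (S * (Q * S⁻¹)) := by rw [hS1S, Matrix.one_mul]
      _ = S⁻¹ * ((S * S) * Q) * S⁻¹ := by simp only [Matrix.mul_assoc]
      _ = S⁻¹ * (Q * (S * S)) * S⁻¹ := by rw [hQSS]
      _ = (S⁻¹ * Q) * (S * (S * S⁻¹)) := by simp only [Matrix.mul_assoc]
      _ = S⁻¹ * Q * S := by rw [hSS1, Matrix.mul_one]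
  have hSQ : S * Q = Q * S := CS.commute_sqrt hB hSu hMH hBS
  have hQiS : Q⁻¹ * S = S * Q⁻¹ := by
    calc Q⁻¹ * S = Q⁻¹ * (S * (Q * Q⁻¹)) := by rw [hQQi, Matrix.mul_one]
      _ = Q⁻¹ * ((S * Q) * Q⁻¹) := by rw [Matrix.mul_assoc S Q Q⁻¹]
      _ = Q⁻¹ * ((Q * S) * Q⁻¹) := by rw [hSQ]
      _ = (Q⁻¹ * Q) * (S * Q⁻¹) := by simp only [Matrix.mul_assoc]
      _ = S * Q⁻¹ := by rw [hQiQ, Matrix.one_mul]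
  -- the orthogonal part K and the complex structure J
  set K := S * Q⁻¹ with hKdef
  have hKK : K * K = -1 := by
    calc K * K = S * (Q⁻¹ * S) * Q⁻¹ := by simp only [hKdef, Matrix.mul_assoc]
      _ = S * (S * Q⁻¹) * Q⁻¹ := by rw [hQiS]
      _ = (S * S) * (Q⁻¹ * Q⁻¹) := by simp only [Matrix.mul_assoc]
      _ = (S * S) * (Q * Q)⁻¹ := by rw [Matrix.mul_inv_rev]
      _ = -(B * B⁻¹) := by
          rw [hQ2, show S * S = -B from by rw [hBneg, neg_neg], Matrix.neg_mul]
      _ = -1 := by rw [Matrix.mul_nonsing_inv _ hBu]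
  set J := β⁻¹ * K * β with hJdef
  have hJJ : J * J = -1 := by
    calc J * J = β⁻¹ * (K * (β * β⁻¹) * K) * β := by simp only [hJdef, Matrix.mul_assoc]
      _ = β⁻¹ * (K * K) * β := by rw [hβinv, Matrix.mul_one]
      _ = β⁻¹ * (-1) * β := by rw [hKK]
      _ = -1 := by rw [Matrix.mul_neg, Matrix.mul_one, Matrix.neg_mul, hβinv']
  -- Δ = β S⁻¹ β and ΔJ = β Q⁻¹ β
  have hSinv : S⁻¹ = β⁻¹ * Δ * β⁻¹ := by
    apply Matrix.inv_eq_right_inv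
    calc S * (β⁻¹ * Δ * β⁻¹) = β * (Δ⁻¹ * ((β * β⁻¹) * Δ)) * β⁻¹ := by
          simp only [hSdef, Matrix.mul_assoc]
      _ = β * (Δ⁻¹ * Δ) * β⁻¹ := by rw [hβinv, Matrix.one_mul]
      _ = 1 := by rw [Matrix.nonsing_inv_mul _ hΔu, Matrix.mul_one, hβinv]
  have hΔeq : β * S⁻¹ * β = Δ := by
    rw [hSinv]
    calc β * (β⁻¹ * Δ * β⁻¹) * β = (β * β⁻¹) * (Δ * (β⁻¹ * β)) := by
          simp only [Matrix.mul_assoc]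
      _ = Δ := by rw [hβinv, hβinv', Matrix.one_mul, Matrix.mul_one]
  have hΔJ : Δ * J = β * Q⁻¹ * β := by
    calc Δ * J = (β * S⁻¹ * β) * (β⁻¹ * K * β) := by rw [hΔeq]
      _ = β * (S⁻¹ * ((β * β⁻¹) * (S * Q⁻¹))) * β := by
          simp only [hKdef, Matrix.mul_assoc]
      _ = β * ((S⁻¹ * S) * Q⁻¹) * β := by
          rw [hβinv, Matrix.one_mul]; simp only [Matrix.mul_assoc]
      _ = β * Q⁻¹ * β := by rw [hS1S, Matrix.one_mul, Matrix.mul_assoc]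
  -- ΔJ is symmetric positive semidefinite
  have hQiH : (Q⁻¹)ᴴ = Q⁻¹ := by rw [Matrix.conjTranspose_nonsing_inv, hQH]
  have hQipsd : (Q⁻¹).PosSemidef := by
    have := hQpsd.conjTranspose_mul_mul_same Q⁻¹
    rwa [hQiH, hQiQ, Matrix.one_mul] at this
  have hΔJpsd : (Δ * J).PosSemidef := by
    rw [hΔJ]
    have := hQipsd.mul_mul_conjTranspose_same β
    rwa [hβH] at this
  have hΔJT : (Δ * J)ᵀ = Δ * J := by
    rw [hΔJ, Matrix.transpose_mul, Matrix.transpose_mul, hβT,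
      Matrix.transpose_nonsing_inv, hQT, Matrix.mul_assoc]
  have hcond2 : Δ * J = -(Jᵀ * Δ) := by
    have h1 : (Δ * J)ᵀ = Jᵀ * Δᵀ := Matrix.transpose_mul Δ J
    rw [hΔJT, hΔT, Matrix.mul_neg] at h1
    rw [h1]
  -- J commutes with Δ⁻¹ α
  have hAeq : Δ⁻¹ * α = β⁻¹ * S * β := by
    calc Δ⁻¹ * α = Δ⁻¹ * (β * β) := by rw [hββ]
      _ = (β⁻¹ * β) * (Δ⁻¹ * (β * β)) := by rw [hβinv', Matrix.one_mul]
      _ = β⁻¹ * S * β := by simp only [hSdef, Matrix.mul_assoc]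
  have hKS : K * S = S * K := by
    calc K * S = S * (Q⁻¹ * S) := by rw [hKdef, Matrix.mul_assoc]
      _ = S * (S * Q⁻¹) := by rw [hQiS]
      _ = S * K := by rw [hKdef]
  have hcomm : J * (Δ⁻¹ * α) = (Δ⁻¹ * α) * J := by
    rw [hAeq, hJdef]
    calc β⁻¹ * K * β * (β⁻¹ * S * β) = β⁻¹ * (K * ((β * β⁻¹) * S)) * β := by
          simp only [Matrix.mul_assoc]
      _ = β⁻¹ * (K * S) * β := by rw [hβinv, Matrix.one_mul, Matrix.mul_assoc]
      _ = β⁻¹ * (S * K) * β := by rw [hKS]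
      _ = β⁻¹ * S * β * (β⁻¹ * K * β) := by
          rw [show β⁻¹ * S * β * (β⁻¹ * K * β) = β⁻¹ * (S * ((β * β⁻¹) * K)) * β from by
            simp only [Matrix.mul_assoc], hβinv, Matrix.one_mul, Matrix.mul_assoc]
  exact ⟨J, ⟨hJJ, hcond2, hΔJpsd⟩, hcomm⟩
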